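/- arXiv:2212.09364 — 3 statements merged into one kernel-verified Lean document; each statement's English description precedes it below -/
import Mathlib

section
/- Let W be a (k+1)-dimensional subspace of the space of homogeneous polynomials of degree d in n+1 variables, let w be a linear monomial weight function with induced valuation ω, and let f₁ ∈ W be nonzero. Then there exist f₂,...,f_{k+1} ∈ W such that f₁,...,f_{k+1} is a basis of W, and there exist exponent tuples I₁,...,I_{k+1} with the coefficient matrix (f^j_{I_i}) upper triangular with nonzero diagonal (hence Plücker coordinate M_{I₁...I_{k+1}} ≠ 0) and ω(f_j) = w(I_j) for every j. -/
set_option synthInstance.maxHeartbeats 1000000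
set_option maxHeartbeats 1000000


open MvPolynomial

/-- The linear weight of an exponent vector: w(I) = Σ_l c_l · i_l. -/
def wt {n : ℕ} (c : Fin n → ℤ) (I : Fin n →₀ ℕ) : ℤ := ∑ l, c l * (I l : ℤ)

/-- ω(f) = min of w over exponent vectors of monomials with nonzero coefficient
(junk value 0 for f = 0). -/
noncomputable def omega {K : Type*} [CommSemiring K] {n : ℕ} (c : Fin n → ℤ)
    (f : MvPolynomial (Fin n) K) : ℤ :=
  WithTop.untopD 0 ((f.support.image (wt c)).min)

/-- A nonzero polynomial has an exponent in its support realizing ω. -/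
lemma exists_min_exp {K : Type*} [CommSemiring K] {n : ℕ} (c : Fin n → ℤ)
    (f : MvPolynomial (Fin n) K) (hf : f ≠ 0) :
    ∃ I ∈ f.support, omega c f = wt c I := by
  have hs : f.support.Nonempty := MvPolynomial.support_nonempty.2 hf
  have him : (f.support.image (wt c)).Nonempty := hs.image _
  obtain ⟨m, hm⟩ := Finset.min_of_nonempty him
  have hmem := Finset.mem_of_min hm
  obtain ⟨I, hI, hwI⟩ := Finset.mem_image.1 hmem
  exact ⟨I, hI, by rw [omega, hm, hwI]; rfl⟩

/-- Main induction: extend a nonzero element to a triangular system. -/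
lemma aux_tri {K : Type*} [Field K] {n : ℕ} (c : Fin (n+1) → ℤ) :
    ∀ (k : ℕ) (W : Submodule K (MvPolynomial (Fin (n+1)) K)),
      Module.finrank K W = k + 1 →
      ∀ f₁ ∈ W, f₁ ≠ 0 →
      ∃ (f : Fin (k+1) → MvPolynomial (Fin (n+1)) K)
        (I : Fin (k+1) → (Fin (n+1) →₀ ℕ)),
        f 0 = f₁ ∧ (∀ j, f j ∈ W) ∧
        (∀ i j, i < j → MvPolynomial.coeff (I i) (f j) = 0) ∧
        (∀ j, MvPolynomial.coeff (I j) (f j) ≠ 0) ∧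
        (∀ j, omega c (f j) = wt c (I j)) := by
  intro k
  induction k with
  | zero =>
    intro W _ f₁ hf₁ hne
    obtain ⟨I₀, hI₀s, hI₀w⟩ := exists_min_exp c f₁ hne
    exact ⟨fun _ => f₁, fun _ => I₀, rfl, fun _ => hf₁,
      fun i j hij => by fin_cases i <;> fin_cases j <;> exact absurd hij (lt_irrefl _),
      fun _ => by rwa [MvPolynomial.mem_support_iff] at hI₀s,
      fun _ => hI₀w⟩
  | succ k ih =>
    intro W hdim f₁ hf₁ hne
    obtain ⟨I₀, hI₀s, hI₀w⟩ := exists_min_exp c f₁ hne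
    have hI₀c : MvPolynomial.coeff I₀ f₁ ≠ 0 := by
      rwa [MvPolynomial.mem_support_iff] at hI₀s
    haveI : FiniteDimensional K W := FiniteDimensional.of_finrank_pos (by omega)
    obtain ⟨W', hW'def⟩ : ∃ W', W' = W ⊓ LinearMap.ker (MvPolynomial.lcoeff K I₀) :=
      ⟨_, rfl⟩
    have hW'le : W' ≤ W := hW'def ▸ inf_le_left
    have hW'ker : W' ≤ LinearMap.ker (MvPolynomial.lcoeff K I₀) := hW'def ▸ inf_le_right
    -- compute finrank of W'
    have hrange : LinearMap.range ((MvPolynomial.lcoeff K I₀).domRestrict W) = ⊤ := by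
      rw [LinearMap.range_eq_top]
      intro a
      refine ⟨(a / MvPolynomial.coeff I₀ f₁) • ⟨f₁, hf₁⟩, ?_⟩
      simp only [LinearMap.domRestrict_apply, SetLike.val_smul, MvPolynomial.coeff_smul,
        MvPolynomial.lcoeff_apply, smul_eq_mul]
      exact div_mul_cancel₀ a hI₀c
    have hker : Module.finrank K
        (LinearMap.ker ((MvPolynomial.lcoeff K I₀).domRestrict W)) = k + 1 := by
      have h2 := LinearMap.finrank_range_add_finrank_ker
        ((MvPolynomial.lcoeff K I₀).domRestrict W)
      rw [hrange, hdim] at h2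
      have h1 : Module.finrank K (⊤ : Submodule K K) = 1 := by
        rw [finrank_top]; exact Module.finrank_self K
      omega
    have hcomap : W'.comap W.subtype =
        LinearMap.ker ((MvPolynomial.lcoeff K I₀).domRestrict W) := by
      ext x
      simp [hW'def, LinearMap.mem_ker, x.2]
    have hdim' : Module.finrank K W' = k + 1 := by
      have h3 : Module.finrank K (W'.comap W.subtype) = Module.finrank K W' :=
        (Submodule.comapSubtypeEquivOfLe hW'le).finrank_eq
      rw [hcomap, hker] at h3
      exact h3.symm
    -- find a nonzero element of W'
    obtain ⟨f₂, hf₂ne⟩ : ∃ f₂ : W', (f₂ : MvPolynomial (Fin (n+1)) K) ≠ 0 := by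
      haveI : FiniteDimensional K W' := FiniteDimensional.of_finrank_pos (by omega)
      have : Nontrivial W' := Module.nontrivial_of_finrank_pos
        (R := K) (M := W') (by omega)
      obtain ⟨x, hx⟩ := exists_ne (0 : W')
      exact ⟨x, fun h => hx (Subtype.ext h)⟩
    obtain ⟨f', I', hf'0, hf'mem, htri, hdiag, homeg⟩ :=
      ih W' hdim' (f₂ : MvPolynomial (Fin (n+1)) K) f₂.2 hf₂ne
    refine ⟨Fin.cons f₁ f', Fin.cons I₀ I', Fin.cons_zero _ _, ?_, ?_, ?_, ?_⟩
    · intro j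
      induction j using Fin.cases with
      | zero => simpa using hf₁
      | succ j' => simpa using hW'le (hf'mem j')
    · intro i j hij
      induction j using Fin.cases with
      | zero => exact absurd hij (Fin.not_lt_zero _)
      | succ j' =>
        induction i using Fin.cases with
        | zero =>
          have : f' j' ∈ LinearMap.ker (MvPolynomial.lcoeff K I₀) := hW'ker (hf'mem j')
          simpa using this
        | succ i' =>
          have h' : i' < j' := by rwa [Fin.succ_lt_succ_iff] at hij
          simpa using htri i' j' h'
    · intro j
      induction j using Fin.cases with
      | zero => simpa using hI₀c
      | succ j' => simpa using hdiag j'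
    · intro j
      induction j using Fin.cases with
      | zero => simpa using hI₀w
      | succ j' => simpa using homeg j'

/-- Any nonzero f₁ in a (k+1)-dimensional space W of degree-d forms extends to a basis
f₁,...,f_{k+1} of W admitting exponent tuples I₁,...,I_{k+1} with upper triangular
coefficient matrix (f^j_{I_i}) with nonzero diagonal and ω(f_j) = w(I_j) for all j. -/
theorem stmt_5 {K : Type*} [Field K] {n d k : ℕ} (c : Fin (n+1) → ℤ)
    (W : Submodule K (MvPolynomial (Fin (n+1)) K))
    (hW : ∀ p ∈ W, p.IsHomogeneous d)
    (hdim : Module.finrank K W = k + 1)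
    (f₁ : MvPolynomial (Fin (n+1)) K) (hf₁ : f₁ ∈ W) (hne : f₁ ≠ 0) :
    ∃ (f : Fin (k+1) → MvPolynomial (Fin (n+1)) K)
      (I : Fin (k+1) → (Fin (n+1) →₀ ℕ)),
      f 0 = f₁ ∧ (∀ j, f j ∈ W) ∧ LinearIndependent K f ∧
      Submodule.span K (Set.range f) = W ∧
      (∀ i j : Fin (k+1), i < j → MvPolynomial.coeff (I i) (f j) = 0) ∧
      (∀ j, MvPolynomial.coeff (I j) (f j) ≠ 0) ∧
      (∀ j, omega c (f j) = wt c (I j)) := by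
  obtain ⟨f, I, hf0, hmem, htri, hdiag, homeg⟩ := aux_tri c k W hdim f₁ hf₁ hne
  -- linear independence from triangularity
  have hli : LinearIndependent K f := by
    rw [Fintype.linearIndependent_iff]
    intro g hg
    have key : ∀ m : ℕ, ∀ j : Fin (k+1), (j : ℕ) = m → g j = 0 := by
      intro m
      induction m using Nat.strong_induction_on with
      | _ m ihm =>
        intro j hj
        have h1 : MvPolynomial.coeff (I j) (∑ i, g i • f i) = 0 := by
          rw [hg]; simp
        rw [MvPolynomial.coeff_sum] at h1
        simp only [MvPolynomial.coeff_smul, smul_eq_mul] at h1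
        rw [Finset.sum_eq_single j] at h1
        · exact (mul_eq_zero.1 h1).resolve_right (hdiag j)
        · intro i _ hij
          rcases lt_or_gt_of_ne hij with h | h
          · rw [ihm (i : ℕ) (by omega : (i : ℕ) < m) i rfl, zero_mul]
          · rw [htri j i h, mul_zero]
        · intro h; exact absurd (Finset.mem_univ j) h
    exact fun j => key (j : ℕ) j rfl
  -- span
  have hspan : Submodule.span K (Set.range f) = W := by
    haveI : FiniteDimensional K W := FiniteDimensional.of_finrank_pos (by omega)
    set B : Fin (k+1) → W := fun j => ⟨f j, hmem j⟩ with hB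
    have hcomp : W.subtype ∘ B = f := rfl
    have hliB : LinearIndependent K B :=
      (hcomp ▸ hli).of_comp W.subtype
    have hspanB : Submodule.span K (Set.range B) = ⊤ :=
      hliB.span_eq_top_of_card_eq_finrank (by simp [hdim])
    have : Submodule.map W.subtype (Submodule.span K (Set.range B)) =
        Submodule.map W.subtype ⊤ := by rw [hspanB]
    rwa [Submodule.map_span, ← Set.range_comp, hcomp, Submodule.map_top,
      Submodule.range_subtype] at this
  exact ⟨f, I, hf0, hmem, hli, hspan, htri, hdiag, homeg⟩
end

section
/- A (k+1)-dimensional space W of degree-d forms in n+1 variables is GIT stable (resp. semistable) for the SL(n+1)-action if and only if for every choice of k+1 linearly independent elements f₁,...,f_{k+1} of W, the degree d(k+1) form f₁·f₂·…·f_{k+1} is GIT stable (resp. semistable) as a hypersurface. -/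
open MvPolynomial

/-- ω of a linear system given by generators f: the minimum of Σ_j w(I_j) over tuples of
exponent vectors whose Plücker coordinate (coefficient determinant) is nonzero. -/
noncomputable def omegaW {K : Type*} [CommRing K] {n : ℕ} {ι : Type*} [Fintype ι]
    [DecidableEq ι] (c : Fin n → ℤ) (f : ι → MvPolynomial (Fin n) K) : ℤ :=
  sInf { s : ℤ | ∃ I : ι → (Fin n →₀ ℕ),
    (Matrix.of fun j i => MvPolynomial.coeff (I i) (f j)).det ≠ 0 ∧ s = ∑ j, wt c (I j) }


/-- A normalized one-parameter subgroup of SL(n+1): integer weights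
a₀ ≥ a₁ ≥ ... ≥ aₙ with Σ aₗ = 0 and a₀ > 0. -/
def Normalized {n : ℕ} (a : Fin (n+1) → ℤ) : Prop :=
  Antitone a ∧ (∑ l, a l) = 0 ∧ 0 < a 0

/-- The normalization factor A_λ = Σ_{l=0}^{n-1} (a_l - a_n). -/
def Aof {n : ℕ} (a : Fin (n+1) → ℤ) : ℤ :=
  ∑ l : Fin n, (a l.castSucc - a (Fin.last n))

/-- The shifted weights a_l - a_n used in the tilde weights. -/
def cOf {n : ℕ} (a : Fin (n+1) → ℤ) : Fin (n+1) → ℤ :=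
  fun l => a l - a (Fin.last n)

/-- A degree-e form g in n+1 variables is GIT stable iff ω(g,λ)/A_λ < e/(n+1) for every
normalized one-parameter subgroup λ. -/
def FormStable {K : Type*} [CommSemiring K] (n : ℕ) (e : ℚ)
    (g : MvPolynomial (Fin (n+1)) K) : Prop :=
  ∀ a : Fin (n+1) → ℤ, Normalized a →
    (omega (cOf a) g : ℚ) / (Aof a : ℚ) < e / (n + 1)

/-- A degree-e form g in n+1 variables is GIT semistable iff ω(g,λ)/A_λ ≤ e/(n+1) for every
normalized one-parameter subgroup λ. -/
def FormSemistable {K : Type*} [CommSemiring K] (n : ℕ) (e : ℚ)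
    (g : MvPolynomial (Fin (n+1)) K) : Prop :=
  ∀ a : Fin (n+1) → ℤ, Normalized a →
    (omega (cOf a) g : ℚ) / (Aof a : ℚ) ≤ e / (n + 1)

lemma wt_add {n : ℕ} (c : Fin n → ℤ) (I J : Fin n →₀ ℕ) :
    wt c (I + J) = wt c I + wt c J := by
  simp [wt, mul_add, Finset.sum_add_distrib]

lemma wt_nonneg' {n : ℕ} {c : Fin n → ℤ} (hc : ∀ l, 0 ≤ c l) (I : Fin n →₀ ℕ) :
    0 ≤ wt c I := Finset.sum_nonneg fun l _ => mul_nonneg (hc l) (Int.natCast_nonneg _)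


lemma omega_le {K : Type*} [CommSemiring K] {n : ℕ} {c : Fin n → ℤ}
    {p : MvPolynomial (Fin n) K} {J : Fin n →₀ ℕ} (hJ : J ∈ p.support) :
    omega c p ≤ wt c J := by
  have h := Finset.min_le (Finset.mem_image_of_mem (wt c) hJ)
  obtain ⟨m, hm⟩ := Finset.min_of_mem (Finset.mem_image_of_mem (wt c) hJ)
  rw [omega, hm]
  rw [hm] at h
  simpa using h

lemma exists_omega_mem {K : Type*} [CommSemiring K] {n : ℕ} (c : Fin n → ℤ)
    {p : MvPolynomial (Fin n) K} (hp : p ≠ 0) :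
    ∃ J ∈ p.support, wt c J = omega c p := by
  have hne : (p.support.image (wt c)).Nonempty :=
    (support_nonempty.2 hp).image _
  obtain ⟨m, hm⟩ := Finset.min_of_nonempty hne
  have : m ∈ p.support.image (wt c) := Finset.mem_of_min hm
  obtain ⟨J, hJ, hJm⟩ := Finset.mem_image.1 this
  exact ⟨J, hJ, by rw [hJm, omega, hm]; simp⟩

lemma omega_one {K : Type*} [CommSemiring K] [Nontrivial K] {n : ℕ} (c : Fin n → ℤ) :
    omega c (1 : MvPolynomial (Fin n) K) = 0 := by
  have h1 : (1 : MvPolynomial (Fin n) K).support = {0} := by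
    classical
    rw [show (1 : MvPolynomial (Fin n) K) = monomial 0 1 from rfl, support_monomial]
    simp
  have : wt c 0 = 0 := by simp [wt]
  rw [omega, h1]
  simp [this]


lemma omega_mul {K : Type*} [Field K] {n : ℕ} (c : Fin n → ℤ)
    {p q : MvPolynomial (Fin n) K} (hp : p ≠ 0) (hq : q ≠ 0) :
    omega c (p * q) = omega c p + omega c q := by
  classical
  have hpq : p * q ≠ 0 := mul_ne_zero hp hq
  obtain ⟨Jp, hJp, hwp⟩ := exists_omega_mem c hp
  obtain ⟨Jq, hJq, hwq⟩ := exists_omega_mem c hq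
  set Sp := p.support.filter (fun I => wt c I = omega c p) with hSp
  set Sq := q.support.filter (fun I => wt c I = omega c q) with hSq
  have hSpne : Sp.Nonempty := ⟨Jp, Finset.mem_filter.2 ⟨hJp, hwp⟩⟩
  have hSqne : Sq.Nonempty := ⟨Jq, Finset.mem_filter.2 ⟨hJq, hwq⟩⟩
  obtain ⟨Ip, hIp, hIpmax⟩ := Finset.exists_max_image Sp (fun I => toLex I) hSpne
  obtain ⟨Iq, hIq, hIqmax⟩ := Finset.exists_max_image Sq (fun I => toLex I) hSqne
  obtain ⟨hIps, hIpw⟩ := Finset.mem_filter.1 hIp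
  obtain ⟨hIqs, hIqw⟩ := Finset.mem_filter.1 hIq
  have hcoeff : coeff (Ip + Iq) (p * q) = coeff Ip p * coeff Iq q := by
    rw [coeff_mul]
    apply Finset.sum_eq_single_of_mem (Ip, Iq) (Finset.HasAntidiagonal.mem_antidiagonal.2 rfl)
    rintro ⟨I, I'⟩ hmem hne
    rw [Finset.HasAntidiagonal.mem_antidiagonal] at hmem
    by_contra h0
    have hI : I ∈ p.support := mem_support_iff.2 fun h => h0 (by rw [h, zero_mul])
    have hI' : I' ∈ q.support := mem_support_iff.2 fun h => h0 (by rw [h, mul_zero])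
    have h1 : omega c p ≤ wt c I := omega_le hI
    have h2 : omega c q ≤ wt c I' := omega_le hI'
    have hsum : wt c I + wt c I' = omega c p + omega c q := by
      rw [← wt_add, hmem, wt_add, hIpw, hIqw]
    have hwI : wt c I = omega c p := by omega
    have hwI' : wt c I' = omega c q := by omega
    have hle1 : toLex I ≤ toLex Ip := hIpmax I (Finset.mem_filter.2 ⟨hI, hwI⟩)
    have hle2 : toLex I' ≤ toLex Iq := hIqmax I' (Finset.mem_filter.2 ⟨hI', hwI'⟩)
    have hlt : toLex I + toLex I' < toLex Ip + toLex Iq := by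
      rcases eq_or_ne I Ip with rfl | hne1
      · rcases eq_or_ne I' Iq with rfl | hne2
        · exact absurd rfl hne
        · exact add_lt_add_right (hle2.lt_of_ne (fun h => hne2 (toLex.injective h))) _
      · exact add_lt_add_of_lt_of_le (hle1.lt_of_ne (fun h => hne1 (toLex.injective h))) hle2
    rw [← toLex_add, ← toLex_add, hmem] at hlt
    exact lt_irrefl _ hlt
  have hub : omega c (p * q) ≤ omega c p + omega c q := by
    have : Ip + Iq ∈ (p * q).support := mem_support_iff.2 (by
      rw [hcoeff]
      exact mul_ne_zero (mem_support_iff.1 hIps) (mem_support_iff.1 hIqs))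
    calc omega c (p * q) ≤ wt c (Ip + Iq) := omega_le this
      _ = omega c p + omega c q := by rw [wt_add, hIpw, hIqw]
  have hlb : omega c p + omega c q ≤ omega c (p * q) := by
    obtain ⟨J, hJ, hw⟩ := exists_omega_mem c hpq
    have := MvPolynomial.support_mul p q hJ
    obtain ⟨I, hI, I', hI', hII⟩ := Finset.mem_add.1 this
    rw [← hw, ← hII, wt_add]
    exact add_le_add (omega_le hI) (omega_le hI')
  omega

lemma omega_prod {K : Type*} [Field K] {n : ℕ} (c : Fin n → ℤ) {ι : Type*}
    (s : Finset ι) (g : ι → MvPolynomial (Fin n) K) (hg : ∀ j ∈ s, g j ≠ 0) :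
    omega c (∏ j ∈ s, g j) = ∑ j ∈ s, omega c (g j) := by
  classical
  induction s using Finset.cons_induction with
  | empty => simpa using omega_one c
  | cons a s ha ih =>
    rw [Finset.prod_cons, Finset.sum_cons,
      omega_mul c (hg a (Finset.mem_cons_self a s))
        (Finset.prod_ne_zero_iff.2 fun j hj => hg j (Finset.mem_cons_of_mem hj)),
      ih fun j hj => hg j (Finset.mem_cons_of_mem hj)]


lemma exists_det_ne_zero {K : Type*} [Field K] {n : ℕ} :
    ∀ {m : ℕ} (v : Fin m → MvPolynomial (Fin n) K), LinearIndependent K v →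
    ∃ I : Fin m → (Fin n →₀ ℕ),
      (Matrix.of fun j i => MvPolynomial.coeff (I i) (v j)).det ≠ 0 := by
  intro m
  induction m with
  | zero =>
    intro v _
    exact ⟨fun i => i.elim0, by simp [Matrix.det_isEmpty]⟩
  | succ m ih =>
    intro v hv
    obtain ⟨I, hdet⟩ := ih (v ∘ Fin.castSucc) (hv.comp _ (Fin.castSucc_injective m))
    set M : Matrix (Fin m) (Fin m) K := Matrix.of fun j i => coeff (I i) (v j.castSucc) with hM
    have hMdet : M.det ≠ 0 := hdet
    have hMunit : IsUnit M.det := isUnit_iff_ne_zero.2 hMdet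
    set r : Fin m → K := fun i => coeff (I i) (v (Fin.last m)) with hr
    set cc : Fin m → K := Matrix.vecMul r M⁻¹ with hc
    have hcM : Matrix.vecMul cc M = r := by
      rw [hc, Matrix.vecMul_vecMul, Matrix.nonsing_inv_mul M hMunit, Matrix.vecMul_one]
    set u : MvPolynomial (Fin n) K :=
      v (Fin.last m) - ∑ j, cc j • v (Fin.castSucc j) with hu
    have hune : u ≠ 0 := by
      intro h0
      have hsum : ∑ j : Fin (m+1), (Fin.snoc (fun j => -cc j) 1 : Fin (m+1) → K) j • v j = 0 := by
        rw [Fin.sum_univ_castSucc]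
        simp only [Fin.snoc_castSucc, Fin.snoc_last, one_smul, neg_smul]
        rw [Finset.sum_neg_distrib]
        have : v (Fin.last m) - ∑ j : Fin m, cc j • v j.castSucc = 0 := hu ▸ h0
        linear_combination (norm := abel) this
      have := Fintype.linearIndependent_iff.1 hv _ hsum (Fin.last m)
      simp at this
    obtain ⟨J, hJ⟩ := MvPolynomial.ne_zero_iff.1 hune
    refine ⟨(Fin.snoc I J : Fin (m+1) → (Fin n →₀ ℕ)), ?_⟩
    set N : Matrix (Fin (m+1)) (Fin (m+1)) K :=
      Matrix.of fun j i => coeff ((Fin.snoc I J : Fin (m+1) → (Fin n →₀ ℕ)) i) (v j) with hN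
    intro hNdet
    obtain ⟨x, hx0, hxN⟩ := Matrix.exists_vecMul_eq_zero_iff.2 hNdet
    set p : MvPolynomial (Fin n) K := ∑ j, x j • v j with hp
    have hcoeffp : ∀ E : Fin n →₀ ℕ, coeff E p = ∑ j, x j * coeff E (v j) := by
      intro E
      rw [hp, MvPolynomial.coeff_sum]
      simp [MvPolynomial.coeff_smul, smul_eq_mul]
    have hpI : ∀ i : Fin (m+1), coeff ((Fin.snoc I J : Fin (m+1) → (Fin n →₀ ℕ)) i) p = 0 := by
      intro i
      rw [hcoeffp]
      have := congrFun hxN i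
      simpa [Matrix.vecMul, dotProduct, hN, mul_comm] using this
    -- z := x ∘ castSucc + x last • cc  kills M
    set z : Fin m → K := fun j => x (Fin.castSucc j) + x (Fin.last m) * cc j with hz
    have hzM : Matrix.vecMul z M = 0 := by
      funext i
      have h1 : coeff (I i) p = 0 := by
        have := hpI (Fin.castSucc i)
        rwa [Fin.snoc_castSucc] at this
      rw [hcoeffp] at h1
      rw [Fin.sum_univ_castSucc] at h1
      have h2 : (Matrix.vecMul cc M) i = r i := congrFun hcM i
      simp only [Matrix.vecMul, dotProduct] at h2
      show ∑ j, z j * M j i = 0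
      calc ∑ j, z j * M j i
          = ∑ j, (x j.castSucc * M j i + x (Fin.last m) * (cc j * M j i)) :=
            Finset.sum_congr rfl fun j _ => by simp only [hz]; ring
        _ = ∑ j, x j.castSucc * M j i + x (Fin.last m) * ∑ j, cc j * M j i := by
            rw [Finset.sum_add_distrib, Finset.mul_sum]
        _ = ∑ j, x j.castSucc * M j i + x (Fin.last m) * r i := by rw [h2]
        _ = 0 := h1
    have hz0 : z = 0 := by
      have := congrArg (fun w => Matrix.vecMul w M⁻¹) hzM
      simpa [Matrix.vecMul_vecMul, Matrix.mul_nonsing_inv M hMunit, Matrix.vecMul_one,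
        Matrix.zero_vecMul] using this
    -- hence p = x last • u
    have hplast : p = x (Fin.last m) • u := by
      have hxc : ∀ j : Fin m, x (Fin.castSucc j) = -(x (Fin.last m) * cc j) := by
        intro j
        have := congrFun hz0 j
        simp only [hz, Pi.zero_apply] at this
        linear_combination this
      have hterm : ∀ j : Fin m, x (Fin.castSucc j) • v (Fin.castSucc j)
           = -(x (Fin.last m) • (cc j • v (Fin.castSucc j))) := by
        intro j; rw [hxc j, neg_smul, smul_smul]
      rw [hp, Fin.sum_univ_castSucc, Finset.sum_congr rfl (fun j _ => hterm j),
        Finset.sum_neg_distrib, hu, smul_sub, Finset.smul_sum]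
      abel
    by_cases hlast : x (Fin.last m) = 0
    · have hxz : ∀ j : Fin m, x (Fin.castSucc j) = 0 := by
        intro j
        have := congrFun hz0 j
        simp only [hz, hlast, zero_mul, add_zero, Pi.zero_apply] at this
        exact this
      apply hx0
      funext j
      induction j using Fin.lastCases with
      | last => exact hlast
      | cast i => exact hxz i
    · have := hpI (Fin.last m)
      rw [Fin.snoc_last, hplast, MvPolynomial.coeff_smul] at this
      exact hJ (by
        rcases mul_eq_zero.1 this with h | h
        · exact absurd h hlast
        · exact h)


lemma cOf_nonneg {n : ℕ} {a : Fin (n+1) → ℤ} (ha : Normalized a) (l : Fin (n+1)) :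
    0 ≤ cOf a l := sub_nonneg.2 (ha.1 (Fin.le_last l))

lemma Aof_pos {n : ℕ} {a : Fin (n+1) → ℤ} (ha : Normalized a) : 0 < Aof a := by
  obtain ⟨hmono, hsum, hpos⟩ := ha
  have hlast : a (Fin.last n) < 0 := by
    by_contra hge
    push_neg at hge
    have h1 : ∀ i : Fin n, 0 ≤ a i.succ := fun i => le_trans hge (hmono (Fin.le_last _))
    have : 0 < ∑ l, a l := by
      rw [Fin.sum_univ_succ]
      have : 0 ≤ ∑ i : Fin n, a i.succ := Finset.sum_nonneg fun i _ => h1 i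
      omega
    omega
  have hA : Aof a = (∑ l, a l) - (n+1) * a (Fin.last n) := by
    have h2 : ∑ l : Fin (n+1), (a l - a (Fin.last n)) = Aof a := by
      rw [Fin.sum_univ_castSucc]
      simp [Aof]
    rw [← h2, Finset.sum_sub_distrib]
    simp [Finset.card_univ, mul_comm]
  rw [hA, hsum]
  nlinarith

lemma span_eq_span {K : Type*} [Field K] {V : Type*} [AddCommGroup V] [Module K V] {k : ℕ}
    {f g : Fin (k+1) → V} (hind : LinearIndependent K f)
    (hg : ∀ j, g j ∈ Submodule.span K (Set.range f)) (hgind : LinearIndependent K g) :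
    Submodule.span K (Set.range g) = Submodule.span K (Set.range f) := by
  classical
  set W := Submodule.span K (Set.range f) with hW
  haveI : FiniteDimensional K W := FiniteDimensional.span_of_finite K (Set.finite_range f)
  set g' : Fin (k+1) → W := fun j => ⟨g j, hg j⟩ with hg'
  have hcomp : (W.subtype ∘ g') = g := by funext j; rfl
  have hgind' : LinearIndependent K g' :=
    LinearIndependent.of_comp W.subtype (by rw [hcomp]; exact hgind)
  have hcard : Fintype.card (Fin (k+1)) = Module.finrank K W := by
    rw [hW, finrank_span_eq_card hind]
  have htop : Submodule.span K (Set.range g') = ⊤ :=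
    hgind'.span_eq_top_of_card_eq_finrank hcard
  have : Submodule.map W.subtype (Submodule.span K (Set.range g')) =
      Submodule.span K (Set.range g) := by
    rw [Submodule.map_span, ← Set.range_comp, hcomp]
  rw [← this, htop, Submodule.map_top, Submodule.range_subtype]

lemma omega_prod_le_omegaW {K : Type*} [Field K] {n k : ℕ} (c : Fin (n+1) → ℤ)
    (f g : Fin (k+1) → MvPolynomial (Fin (n+1)) K)
    (hind : LinearIndependent K f)
    (hg : ∀ j, g j ∈ Submodule.span K (Set.range f)) (hgind : LinearIndependent K g) :
    omega c (∏ j, g j) ≤ omegaW c f := by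
  classical
  rw [omega_prod c Finset.univ g (fun j _ => hgind.ne_zero j)]
  obtain ⟨I₁, hdet₁⟩ := exists_det_ne_zero f hind
  refine le_csInf ⟨∑ j, wt c (I₁ j), ⟨I₁, hdet₁, rfl⟩⟩ ?_
  rintro s ⟨I, hdet, rfl⟩
  have hspan := span_eq_span hind hg hgind
  have hf : ∀ j, f j ∈ Submodule.span K (Set.range g) := fun j =>
    hspan ▸ Submodule.subset_span (Set.mem_range_self j)
  choose C hC using fun j => (Submodule.mem_span_range_iff_exists_fun _).1 (hf j)
  set G : Matrix (Fin (k+1)) (Fin (k+1)) K := Matrix.of fun m i => coeff (I i) (g m) with hG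
  have hfact : (Matrix.of fun j i => coeff (I i) (f j)) = (Matrix.of C) * G := by
    ext j i
    rw [Matrix.mul_apply, Matrix.of_apply, ← hC j, coeff_sum]
    simp only [coeff_smul, smul_eq_mul, hG, Matrix.of_apply]
  have hGdet : G.det ≠ 0 := by
    intro h; apply hdet; rw [hfact, Matrix.det_mul, h, mul_zero]
  rw [Matrix.det_apply] at hGdet
  obtain ⟨σ, -, hσ⟩ := Finset.exists_ne_zero_of_sum_ne_zero hGdet
  have hprod : ∏ i, G (σ i) i ≠ 0 := fun h => hσ (by rw [h, smul_zero])
  have hterm : ∀ i, coeff (I i) (g (σ i)) ≠ 0 := by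
    intro i
    exact Finset.prod_ne_zero_iff.1 hprod i (Finset.mem_univ i)
  calc ∑ j, omega c (g j) = ∑ i, omega c (g (σ i)) := (Equiv.sum_comp σ _).symm
    _ ≤ ∑ i, wt c (I i) := Finset.sum_le_sum fun i _ =>
        omega_le (mem_support_iff.2 (hterm i))

lemma exists_good_basis {K : Type*} [Field K] {n k : ℕ} {c : Fin (n+1) → ℤ}
    (hc : ∀ l, 0 ≤ c l)
    (f : Fin (k+1) → MvPolynomial (Fin (n+1)) K) (hind : LinearIndependent K f) :
    ∃ h : Fin (k+1) → MvPolynomial (Fin (n+1)) K,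
      (∀ j, h j ∈ Submodule.span K (Set.range f)) ∧ LinearIndependent K h ∧
      ∑ j, omega c (h j) = omegaW c f := by
  classical
  set S : Set ℤ := { s : ℤ | ∃ I : Fin (k+1) → (Fin (n+1) →₀ ℕ),
    (Matrix.of fun j i => MvPolynomial.coeff (I i) (f j)).det ≠ 0 ∧ s = ∑ j, wt c (I j) }
    with hS
  obtain ⟨I₁, hdet₁⟩ := exists_det_ne_zero f hind
  have hSne : S.Nonempty := ⟨∑ j, wt c (I₁ j), I₁, hdet₁, rfl⟩
  have hSbdd : BddBelow S := by
    refine ⟨0, ?_⟩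
    rintro s ⟨I, -, rfl⟩
    exact Finset.sum_nonneg fun j _ => wt_nonneg' hc (I j)
  have hmem : sInf S ∈ S := Int.csInf_mem hSne hSbdd
  obtain ⟨I₀, hdet, hsum⟩ := hmem
  set M : Matrix (Fin (k+1)) (Fin (k+1)) K :=
    Matrix.of fun j i => coeff (I₀ i) (f j) with hM
  have hMdet : M.det ≠ 0 := hdet
  have hMunit : IsUnit M.det := isUnit_iff_ne_zero.2 hMdet
  set h : Fin (k+1) → MvPolynomial (Fin (n+1)) K :=
    fun i => ∑ m, M⁻¹ i m • f m with hh
  have hdelta : ∀ j i', coeff (I₀ i') (h j) =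
      (1 : Matrix (Fin (k+1)) (Fin (k+1)) K) j i' := by
    intro j i'
    rw [← Matrix.nonsing_inv_mul M hMunit, Matrix.mul_apply, hh, coeff_sum]
    simp only [coeff_smul, smul_eq_mul, hM, Matrix.of_apply]
  have hspan : ∀ j, h j ∈ Submodule.span K (Set.range f) := fun j =>
    Submodule.sum_mem _ fun m _ =>
      Submodule.smul_mem _ _ (Submodule.subset_span (Set.mem_range_self m))
  have hcoeffh : ∀ (j : Fin (k+1)) (E : Fin (n+1) →₀ ℕ),
      coeff E (h j) = ∑ m, M⁻¹ j m * coeff E (f m) := by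
    intro j E
    rw [hh, coeff_sum]
    simp [coeff_smul, smul_eq_mul]
  have hlin : LinearIndependent K h := by
    rw [Fintype.linearIndependent_iff]
    intro y hy
    have hexp : ∑ m, (Matrix.vecMul y M⁻¹) m • f m = 0 := by
      rw [← hy]
      simp only [hh, Finset.smul_sum, smul_smul]
      rw [Finset.sum_comm]
      exact Finset.sum_congr rfl fun m _ => by rw [← Finset.sum_smul]; rfl
    have hv : ∀ m, Matrix.vecMul y M⁻¹ m = 0 :=
      Fintype.linearIndependent_iff.1 hind _ hexp
    have hv0 : Matrix.vecMul y M⁻¹ = 0 := funext hv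
    intro j
    have : Matrix.vecMul (Matrix.vecMul y M⁻¹) M = y := by
      rw [Matrix.vecMul_vecMul, Matrix.nonsing_inv_mul M hMunit, Matrix.vecMul_one]
    rw [← this, hv0, Matrix.zero_vecMul]
    rfl
  have homega : ∀ i, omega c (h i) = wt c (I₀ i) := by
    intro i
    have hmemsupp : I₀ i ∈ (h i).support := by
      rw [mem_support_iff, hdelta i i, Matrix.one_apply_eq]
      exact one_ne_zero
    have hle : omega c (h i) ≤ wt c (I₀ i) := omega_le hmemsupp
    rcases eq_or_lt_of_le hle with heq | hlt
    · exact heq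
    exfalso
    obtain ⟨J, hJ, hwJ⟩ := exists_omega_mem c (hlin.ne_zero i)
    have hJlt : wt c J < wt c (I₀ i) := by rw [hwJ]; exact hlt
    set I' : Fin (k+1) → (Fin (n+1) →₀ ℕ) := Function.update I₀ i J with hI'
    set A' : Matrix (Fin (k+1)) (Fin (k+1)) K :=
      Matrix.of fun j i' => coeff (I' i') (h j) with hA'
    have hA'det : A'.det ≠ 0 := by
      intro h0
      obtain ⟨x, hx0, hxA⟩ := Matrix.exists_vecMul_eq_zero_iff.2 h0
      have hxi' : ∀ i', i' ≠ i → x i' = 0 := by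
        intro i' hne
        have := congrFun hxA i'
        simp only [Matrix.vecMul, dotProduct, hA', Matrix.of_apply,
          Pi.zero_apply] at this
        rw [hI'] at this
        simp only [Function.update_of_ne hne] at this
        calc x i' = ∑ j, x j * (1 : Matrix (Fin (k+1)) (Fin (k+1)) K) j i' := by
              simp [Matrix.one_apply]
          _ = 0 := by
              rw [← this]
              exact Finset.sum_congr rfl fun j _ => by rw [hdelta]
      have hxi : x i = 0 := by
        have := congrFun hxA i
        simp only [Matrix.vecMul, dotProduct, hA', Matrix.of_apply,
          Pi.zero_apply] at this
        rw [hI'] at this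
        simp only [Function.update_self] at this
        have hsingle : ∑ j, x j * coeff J (h j) = x i * coeff J (h i) := by
          apply Finset.sum_eq_single_of_mem i (Finset.mem_univ i)
          intro j _ hne
          rw [hxi' j hne, zero_mul]
        rw [hsingle] at this
        rcases mul_eq_zero.1 this with h1 | h1
        · exact h1
        · exact absurd h1 (mem_support_iff.1 hJ)
      apply hx0
      funext j
      rcases eq_or_ne j i with rfl | hne
      · exact hxi
      · exact hxi' j hne
    have hB'det : (Matrix.of fun j i' => coeff (I' i') (f j)).det ≠ 0 := by
      intro h0
      apply hA'det
      have : A' = M⁻¹ * (Matrix.of fun j i' => coeff (I' i') (f j)) := by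
        ext j i'
        rw [hA', Matrix.of_apply, hcoeffh, Matrix.mul_apply]
        rfl
      rw [this, Matrix.det_mul, h0, mul_zero]
    have hmem' : (∑ j, wt c (I' j)) ∈ S := ⟨I', hB'det, rfl⟩
    have hge : sInf S ≤ ∑ j, wt c (I' j) := csInf_le hSbdd hmem'
    have hsum' : ∑ j, wt c (I' j) = (∑ j, wt c (I₀ j)) - wt c (I₀ i) + wt c J := by
      have hupd : ∀ j, wt c (I' j) = Function.update (fun j => wt c (I₀ j)) i (wt c J) j := by
        intro j; rw [hI']; exact Function.apply_update (fun _ E => wt c E) I₀ i J j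
      rw [Finset.sum_congr rfl fun j _ => hupd j, Finset.sum_update_of_mem (Finset.mem_univ i)]
      rw [show ∑ j, wt c (I₀ j) = wt c (I₀ i) + ∑ j ∈ Finset.univ \ {i}, wt c (I₀ j) from ?_]
      · ring
      · rw [Finset.sum_eq_add_sum_sdiff_singleton_of_mem (Finset.mem_univ i)]
    rw [hsum'] at hge
    linarith [hsum, hge, hJlt]
  refine ⟨h, hspan, hlin, ?_⟩
  have homegaW : omegaW c f = sInf S := rfl
  rw [homegaW, hsum]
  exact Finset.sum_congr rfl fun i _ => homega i


/-- Theorem 1.1: a (k+1)-dimensional linear system W (given by a basis f of degree-d forms)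
is GIT stable (resp. semistable) iff for every choice of k+1 linearly independent elements
g₁,...,g_{k+1} of W the degree d(k+1) form g₁⋯g_{k+1} is GIT stable (resp. semistable). -/
theorem stmt_8 {K : Type*} [Field K] {n d k : ℕ}
    (f : Fin (k+1) → MvPolynomial (Fin (n+1)) K)
    (hind : LinearIndependent K f) (hhom : ∀ j, (f j).IsHomogeneous d) :
    ((∀ a : Fin (n+1) → ℤ, Normalized a →
        (omegaW (cOf a) f : ℚ) / (Aof a : ℚ) < (d * (k+1) : ℚ) / (n + 1)) ↔
      (∀ g : Fin (k+1) → MvPolynomial (Fin (n+1)) K,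
        (∀ j, g j ∈ Submodule.span K (Set.range f)) → LinearIndependent K g →
        FormStable n (d * (k+1) : ℚ) (∏ j, g j))) ∧
    ((∀ a : Fin (n+1) → ℤ, Normalized a →
        (omegaW (cOf a) f : ℚ) / (Aof a : ℚ) ≤ (d * (k+1) : ℚ) / (n + 1)) ↔
      (∀ g : Fin (k+1) → MvPolynomial (Fin (n+1)) K,
        (∀ j, g j ∈ Submodule.span K (Set.range f)) → LinearIndependent K g →
        FormSemistable n (d * (k+1) : ℚ) (∏ j, g j))) := by
  have hratio : ∀ (g : Fin (k+1) → MvPolynomial (Fin (n+1)) K),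
      (∀ j, g j ∈ Submodule.span K (Set.range f)) → LinearIndependent K g →
      ∀ a : Fin (n+1) → ℤ, Normalized a →
      (omega (cOf a) (∏ j, g j) : ℚ) / (Aof a : ℚ) ≤
        (omegaW (cOf a) f : ℚ) / (Aof a : ℚ) := by
    intro g hg hgind a ha
    have h1 := omega_prod_le_omegaW (cOf a) f g hind hg hgind
    have hA : (0:ℚ) < (Aof a : ℚ) := by exact_mod_cast Aof_pos ha
    exact (div_le_div_iff_of_pos_right hA).2 (by exact_mod_cast h1)
  have hback : ∀ a : Fin (n+1) → ℤ, Normalized a →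
      ∃ g : Fin (k+1) → MvPolynomial (Fin (n+1)) K,
      (∀ j, g j ∈ Submodule.span K (Set.range f)) ∧ LinearIndependent K g ∧
      (omega (cOf a) (∏ j, g j) : ℚ) / (Aof a : ℚ) =
        (omegaW (cOf a) f : ℚ) / (Aof a : ℚ) := by
    intro a ha
    obtain ⟨h, hspan, hlin, hsum⟩ := exists_good_basis (cOf_nonneg ha) f hind
    refine ⟨h, hspan, hlin, ?_⟩
    rw [omega_prod (cOf a) Finset.univ h (fun j _ => hlin.ne_zero j), hsum]
  constructor
  · constructor
    · intro hstab g hg hgind a ha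
      exact lt_of_le_of_lt (hratio g hg hgind a ha) (hstab a ha)
    · intro hg a ha
      obtain ⟨g, hspan, hlin, heq⟩ := hback a ha
      rw [← heq]
      exact hg g hspan hlin a ha
  · constructor
    · intro hstab g hg hgind a ha
      exact le_trans (hratio g hg hgind a ha) (hstab a ha)
    · intro hg a ha
      obtain ⟨g, hspan, hlin, heq⟩ := hback a ha
      rw [← heq]
      exact hg g hspan hlin a ha
end

section
/- Let f₁, f₂, f₃ be quadratic forms in x₀,x₁,x₂ over a field with associated symmetric matrices A₁, A₂, A₃, and let Δ(λ,μ,ν) = det(λA₁ + μA₂ + νA₃) be the discriminant cubic. If f₃ = x₀x₁ (so A₃ is singular) and the point (0:0:1) is a common zero of f₁ and f₂, then Δ and both partial derivatives ∂Δ/∂λ, ∂Δ/∂μ vanish at (λ,μ,ν) = (0,0,1); i.e., the discriminant cubic is singular at (0:0:1). -/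
open MvPolynomial

/-- The quadratic form associated to a 3×3 matrix: f(x) = xᵀ A x. -/
noncomputable def toQuad {K : Type*} [CommRing K] (A : Matrix (Fin 3) (Fin 3) K) :
    MvPolynomial (Fin 3) K :=
  ∑ i, ∑ j, MvPolynomial.C (A i j) * MvPolynomial.X i * MvPolynomial.X j

/-- The discriminant cubic Δ(λ,μ,ν) = det(λA₁ + μA₂ + νA₃) of a net of conics, as a
polynomial in the variables λ = X 0, μ = X 1, ν = X 2. -/
noncomputable def discCubic {K : Type*} [CommRing K]
    (A₁ A₂ A₃ : Matrix (Fin 3) (Fin 3) K) : MvPolynomial (Fin 3) K :=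
  (Matrix.of fun i j =>
    MvPolynomial.C (A₁ i j) * X 0 + MvPolynomial.C (A₂ i j) * X 1 +
      MvPolynomial.C (A₃ i j) * X 2).det

set_option maxHeartbeats 1000000 in
/-- If f₃ = x₀x₁ and (0:0:1) is a common zero of f₁ and f₂, then the discriminant cubic Δ
is singular at (0:0:1): Δ, ∂Δ/∂λ and ∂Δ/∂μ vanish there. -/
theorem stmt_14 {K : Type*} [Field K] (A₁ A₂ A₃ : Matrix (Fin 3) (Fin 3) K)
    (h₁ : A₁.IsSymm) (h₂ : A₂.IsSymm) (h₃ : A₃.IsSymm)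
    (hA₃ : toQuad A₃ = X 0 * X 1)
    (hz₁ : MvPolynomial.eval (![0, 0, 1] : Fin 3 → K) (toQuad A₁) = 0)
    (hz₂ : MvPolynomial.eval (![0, 0, 1] : Fin 3 → K) (toQuad A₂) = 0) :
    MvPolynomial.eval (![0, 0, 1] : Fin 3 → K) (discCubic A₁ A₂ A₃) = 0 ∧
    MvPolynomial.eval (![0, 0, 1] : Fin 3 → K)
      (MvPolynomial.pderiv 0 (discCubic A₁ A₂ A₃)) = 0 ∧
    MvPolynomial.eval (![0, 0, 1] : Fin 3 → K)
      (MvPolynomial.pderiv 1 (discCubic A₁ A₂ A₃)) = 0 := by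
  have key : ∀ (A : Matrix (Fin 3) (Fin 3) K) (v : Fin 3 → K),
      MvPolynomial.eval v (toQuad A) = ∑ i, ∑ j, A i j * v i * v j := by
    intro A v; simp [toQuad, Fin.sum_univ_three]
  have e1 : A₁ 2 2 = 0 := by
    have := hz₁; rw [key] at this; simpa [Fin.sum_univ_three] using this
  have e2 : A₂ 2 2 = 0 := by
    have := hz₂; rw [key] at this; simpa [Fin.sum_univ_three] using this
  have hev : ∀ v : Fin 3 → K,
      (∑ i, ∑ j, A₃ i j * v i * v j) = v 0 * v 1 := by
    intro v
    have := congrArg (MvPolynomial.eval v) hA₃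
    rw [key] at this; simpa using this
  have p2 : A₃ 2 2 = 0 := by
    have := hev ![0,0,1]; simpa [Fin.sum_univ_three] using this
  have p0 : A₃ 0 0 = 0 := by
    have := hev ![1,0,0]; simpa [Fin.sum_univ_three] using this
  have p1 : A₃ 1 1 = 0 := by
    have := hev ![0,1,0]; simpa [Fin.sum_univ_three] using this
  have s02 : A₃ 2 0 = A₃ 0 2 := h₃.apply 0 2
  have s12 : A₃ 2 1 = A₃ 1 2 := h₃.apply 1 2
  have s01 : A₃ 1 0 = A₃ 0 1 := h₃.apply 0 1
  have p01 : (2 : K) * A₃ 0 1 = 1 := by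
    have := hev ![1,1,0]
    simp [Fin.sum_univ_three, p0, p1, s01] at this
    linear_combination this
  have two_ne : (2 : K) ≠ 0 := by
    intro h; rw [h, zero_mul] at p01; exact one_ne_zero p01.symm
  have p02 : A₃ 0 2 = 0 := by
    have := hev ![1,0,1]
    simp [Fin.sum_univ_three, p0, p2, s02] at this
    have h2 : (2:K) * A₃ 0 2 = 0 := by linear_combination this
    exact (mul_eq_zero.mp h2).resolve_left two_ne
  have p12 : A₃ 1 2 = 0 := by
    have := hev ![0,1,1]
    simp [Fin.sum_univ_three, p1, p2, s12] at this
    have h2 : (2:K) * A₃ 1 2 = 0 := by linear_combination this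
    exact (mul_eq_zero.mp h2).resolve_left two_ne
  rw [discCubic, Matrix.det_fin_three]
  refine ⟨?_, ?_, ?_⟩
  · simp only [Matrix.of_apply, map_add, map_sub, map_mul, eval_C, eval_X,
      Matrix.cons_val_zero, Matrix.cons_val_one, Matrix.head_cons, Matrix.cons_val_two,
      Matrix.tail_cons]
    rw [p0, p1, p2, s01, s02, s12, p02, p12]
    ring
  · simp only [Matrix.of_apply, map_add, map_sub, pderiv_mul, pderiv_C, pderiv_X,
      Pi.single_eq_same, Pi.single_eq_of_ne (by decide : (1:Fin 3) ≠ 0),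
      Pi.single_eq_of_ne (by decide : (2:Fin 3) ≠ 0)]
    simp only [map_add, map_sub, map_mul, map_zero, map_one, eval_C, eval_X,
      Matrix.cons_val_zero, Matrix.cons_val_one, Matrix.head_cons, Matrix.cons_val_two,
      Matrix.tail_cons]
    rw [p0, p1, p2, s01, s02, s12, p02, p12, e1, h₁.apply 0 2, h₁.apply 1 2, h₁.apply 0 1]
    ring
  · simp only [Matrix.of_apply, map_add, map_sub, pderiv_mul, pderiv_C, pderiv_X,
      Pi.single_eq_same, Pi.single_eq_of_ne (by decide : (0:Fin 3) ≠ 1),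
      Pi.single_eq_of_ne (by decide : (2:Fin 3) ≠ 1)]
    simp only [map_add, map_sub, map_mul, map_zero, map_one, eval_C, eval_X,
      Matrix.cons_val_zero, Matrix.cons_val_one, Matrix.head_cons, Matrix.cons_val_two,
      Matrix.tail_cons]
    rw [p0, p1, p2, s01, s02, s12, p02, p12, e2, h₂.apply 0 2, h₂.apply 1 2, h₂.apply 0 1]
    ring
end
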